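/- Let ρ, σ be density matrices on ℂⁿ with supp(ρ) ⊆ supp(σ). For α > 1, D̃_α(ρ‖σ) ≥ D_{2-1/α}(ρ‖σ), where D_β(ρ‖σ) = (1/(β-1)) log Tr(ρ^β σ^(1-β)) is the standard Rényi divergence. -/

import Mathlib

open Matrix
open scoped ComplexOrder

/-- Real power of a Hermitian matrix via the spectral theorem (junk value `0` if not
Hermitian). Powers are taken on the support: zero eigenvalues are sent to `0 ^ t`. -/
noncomputable def Matrix.rpowH {m : Type*} [Fintype m] [DecidableEq m]
    (A : Matrix m m ℂ) (t : ℝ) : Matrix m m ℂ :=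
  if hA : A.IsHermitian then
    (hA.eigenvectorUnitary : Matrix m m ℂ) *
      Matrix.diagonal (fun i => ((hA.eigenvalues i ^ t : ℝ) : ℂ)) *
      star (hA.eigenvectorUnitary : Matrix m m ℂ)
  else 0

/-- The sandwiched Rényi relative `α`-entropy
`D̃_α(ρ‖σ) = (α-1)⁻¹ log Tr[(σ^((1-α)/(2α)) ρ σ^((1-α)/(2α)))^α]`. -/
noncomputable def sandwichedRenyi {m : Type*} [Fintype m] [DecidableEq m]
    (α : ℝ) (ρ σ : Matrix m m ℂ) : ℝ :=
  (α - 1)⁻¹ *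
    Real.log (Matrix.trace
      (Matrix.rpowH (Matrix.rpowH σ ((1 - α) / (2 * α)) * ρ *
        Matrix.rpowH σ ((1 - α) / (2 * α))) α)).re

/-- The standard (Petz) Rényi relative `β`-entropy
`D_β(ρ‖σ) = (β-1)⁻¹ log Tr(ρ^β σ^(1-β))`. -/
noncomputable def petzRenyi {m : Type*} [Fintype m] [DecidableEq m]
    (β : ℝ) (ρ σ : Matrix m m ℂ) : ℝ :=
  (β - 1)⁻¹ * Real.log (Matrix.trace (Matrix.rpowH ρ β * Matrix.rpowH σ (1 - β))).re

open Polynomial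

variable {m : Type*} [Fintype m] [DecidableEq m]

theorem my_charpoly_mul_comm {K : Type*} [Field K] (A B : Matrix m m K) :
    (A * B).charpoly = (B * A).charpoly := by
  classical
  set F := FractionRing K[X]
  set φ : K[X] →+* F := algebraMap K[X] F with hφ
  have hinj : Function.Injective φ := IsFractionRing.injective K[X] F
  have hx : (φ X : F) ≠ 0 := by
    intro h
    exact Polynomial.X_ne_zero (hinj (h.trans (map_zero φ).symm))
  apply hinj
  have key : ∀ C D : Matrix m m K,
      φ ((C * D).charpoly) = (φ X) ^ (Fintype.card m) *
        Matrix.det (1 - (φ X)⁻¹ • ((C.map (φ.comp Polynomial.C)) *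
          (D.map (φ.comp Polynomial.C)))) := by
    intro C D
    have h1 : (charmatrix (C * D)).map φ
        = (φ X) • (1 - (φ X)⁻¹ • ((C.map (φ.comp Polynomial.C)) *
          (D.map (φ.comp Polynomial.C)))) := by
      have : (C * D).map (φ.comp Polynomial.C)
          = (C.map (φ.comp Polynomial.C)) * (D.map (φ.comp Polynomial.C)) :=
        Matrix.map_mul
      rw [smul_sub, smul_smul, mul_inv_cancel₀ hx, one_smul, ← this]
      ext i j
      by_cases h : i = j <;>
        simp [h, charmatrix, Matrix.smul_apply, Matrix.one_apply, smul_eq_mul, Matrix.mul_apply,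
          map_sum, _root_.map_mul]
    rw [Matrix.charpoly, RingHom.map_det, RingHom.mapMatrix_apply, h1, Matrix.det_smul]
  rw [key A B, key B A]
  congr 1
  have h2 : (1 : Matrix m m F) - (φ X)⁻¹ • ((A.map (φ.comp Polynomial.C)) *
      (B.map (φ.comp Polynomial.C)))
      = 1 + ((-(φ X)⁻¹) • A.map (φ.comp Polynomial.C)) * (B.map (φ.comp Polynomial.C)) := by
    rw [Matrix.smul_mul, neg_smul, sub_eq_add_neg]
  have h3 : (1 : Matrix m m F) - (φ X)⁻¹ • ((B.map (φ.comp Polynomial.C)) *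
      (A.map (φ.comp Polynomial.C)))
      = 1 + (B.map (φ.comp Polynomial.C)) * ((-(φ X)⁻¹) • A.map (φ.comp Polynomial.C)) := by
    rw [Matrix.mul_smul, neg_smul, sub_eq_add_neg]
  rw [h2, h3, Matrix.det_one_add_mul_comm]

theorem my_charpoly_hermitian {n : ℕ} {A : Matrix (Fin n) (Fin n) ℂ} (hA : A.IsHermitian) :
    A.charpoly = ∏ i, (X - Polynomial.C ((hA.eigenvalues i : ℂ))) := by
  have h1 : A.charpoly = (Matrix.diagonal (RCLike.ofReal ∘ hA.eigenvalues) :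
      Matrix (Fin n) (Fin n) ℂ).charpoly := by
    conv_lhs => rw [hA.spectral_theorem, Unitary.conjStarAlgAut_apply]
    rw [mul_assoc, my_charpoly_mul_comm, mul_assoc,
      (Matrix.mem_unitaryGroup_iff').mp (hA.eigenvectorUnitary).2, mul_one]
  rw [h1, charpoly_of_upperTriangular _ (Matrix.blockTriangular_diagonal _)]
  refine Finset.prod_congr rfl fun i _ => ?_
  simp [Matrix.diagonal_apply_eq]

theorem my_sum_eig_transfer {n : ℕ} {A B : Matrix (Fin n) (Fin n) ℂ}
    (hA : A.IsHermitian) (hB : B.IsHermitian) (h : A.charpoly = B.charpoly) (f : ℝ → ℝ) :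
    ∑ i, f (hA.eigenvalues i) = ∑ i, f (hB.eigenvalues i) := by
  have key : (Finset.univ.val.map hA.eigenvalues) = (Finset.univ.val.map hB.eigenvalues) := by
    apply Multiset.map_injective (Complex.ofReal_injective)
    have hu : ∀ (C : Matrix (Fin n) (Fin n) ℂ) (hC : C.IsHermitian),
        Multiset.map Complex.ofReal (Finset.univ.val.map hC.eigenvalues)
          = C.charpoly.roots := by
      intro C hC
      rw [Multiset.map_map, my_charpoly_hermitian hC]
      have heq : (∏ i, (X - Polynomial.C ((hC.eigenvalues i : ℂ))))
          = ((Finset.univ.val.map (fun i => ((hC.eigenvalues i : ℂ)))).map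
            (fun a => X - Polynomial.C a)).prod := by
        rw [Multiset.map_map, Finset.prod_eq_multiset_prod]
        rfl
      rw [heq, Polynomial.roots_multiset_prod_X_sub_C]
      rfl
    rw [hu A hA, hu B hB, h]
  calc ∑ i, f (hA.eigenvalues i)
      = ((Finset.univ.val.map hA.eigenvalues).map f).sum := by
        rw [Multiset.map_map]; rfl
    _ = ((Finset.univ.val.map hB.eigenvalues).map f).sum := by rw [key]
    _ = ∑ i, f (hB.eigenvalues i) := by rw [Multiset.map_map]; rfl

namespace Matrix

variable {m : Type*} [Fintype m] [DecidableEq m] {A : Matrix m m ℂ}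

lemma rpowH_of_isHermitian (hA : A.IsHermitian) (t : ℝ) :
    A.rpowH t = (hA.eigenvectorUnitary : Matrix m m ℂ) *
      Matrix.diagonal (fun i => ((hA.eigenvalues i ^ t : ℝ) : ℂ)) *
      star (hA.eigenvectorUnitary : Matrix m m ℂ) := dif_pos hA

lemma isHermitian_rpowH (A : Matrix m m ℂ) (t : ℝ) : (A.rpowH t).IsHermitian := by
  rw [Matrix.rpowH]
  split_ifs with hA
  · exact Matrix.isHermitian_mul_mul_conjTranspose _ (Matrix.isHermitian_diagonal_iff.mpr
      (fun i => Complex.conj_ofReal _))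
  · exact Matrix.isHermitian_zero

lemma trace_rpowH (hA : A.IsHermitian) (t : ℝ) :
    (A.rpowH t).trace = ∑ i, ((hA.eigenvalues i ^ t : ℝ) : ℂ) := by
  rw [rpowH_of_isHermitian hA, Matrix.trace_mul_cycle,
    (Matrix.mem_unitaryGroup_iff').mp (hA.eigenvectorUnitary).2, one_mul,
    Matrix.trace_diagonal]

lemma rpowH_mul_rpowH (hA : A.IsHermitian) {s t : ℝ}
    (h : ∀ i, hA.eigenvalues i ^ s * hA.eigenvalues i ^ t = hA.eigenvalues i ^ (s + t)) :
    A.rpowH s * A.rpowH t = A.rpowH (s + t) := by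
  rw [rpowH_of_isHermitian hA, rpowH_of_isHermitian hA, rpowH_of_isHermitian hA]
  have h1 : ∀ X : Matrix m m ℂ,
      star (hA.eigenvectorUnitary : Matrix m m ℂ) *
        ((hA.eigenvectorUnitary : Matrix m m ℂ) * X) = X := fun X => by
    rw [← mul_assoc, (Matrix.mem_unitaryGroup_iff').mp (hA.eigenvectorUnitary).2, one_mul]
  simp only [mul_assoc, h1]
  rw [← mul_assoc (Matrix.diagonal _), Matrix.diagonal_mul_diagonal]
  have h2 : (fun i => ((hA.eigenvalues i ^ s : ℝ) : ℂ) * ((hA.eigenvalues i ^ t : ℝ) : ℂ))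
      = fun i => ((hA.eigenvalues i ^ (s + t) : ℝ) : ℂ) :=
    funext fun i => by rw [← Complex.ofReal_mul, h i]
  rw [h2]

lemma rpowH_one (hA : A.IsHermitian) : A.rpowH 1 = A := by
  rw [rpowH_of_isHermitian hA]
  simp only [Real.rpow_one]
  conv_rhs => rw [hA.spectral_theorem]
  rfl

end Matrix

namespace Matrix

variable {m : Type*} [Fintype m] [DecidableEq m]

lemma trace_conj_diag_mul_conj_diag (U V : Matrix.unitaryGroup m ℂ) (a b : m → ℝ) :
    (((U : Matrix m m ℂ) * Matrix.diagonal (fun i => (a i : ℂ)) * star (U : Matrix m m ℂ)) *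
      ((V : Matrix m m ℂ) * Matrix.diagonal (fun i => (b i : ℂ)) * star (V : Matrix m m ℂ))).trace
    = ((∑ i, ∑ j, a i * b j *
        Complex.normSq ((star (U : Matrix m m ℂ) * (V : Matrix m m ℂ)) i j) : ℝ) : ℂ) := by
  set W := star (U : Matrix m m ℂ) * (V : Matrix m m ℂ) with hW
  set Da := Matrix.diagonal (fun i => (a i : ℂ)) with hDa
  set Db := Matrix.diagonal (fun i => (b i : ℂ)) with hDb
  have e1 : ((U : Matrix m m ℂ) * Da * star (U : Matrix m m ℂ)) *
      ((V : Matrix m m ℂ) * Db * star (V : Matrix m m ℂ))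
      = ((U : Matrix m m ℂ) * Da * star (U : Matrix m m ℂ) * (V : Matrix m m ℂ) * Db) *
        star (V : Matrix m m ℂ) := by
    simp only [mul_assoc]
  have e2 : star (V : Matrix m m ℂ) *
      ((U : Matrix m m ℂ) * Da * star (U : Matrix m m ℂ) * (V : Matrix m m ℂ) * Db)
      = star W * (Da * W * Db) := by
    rw [hW]
    simp only [star_mul, star_star, mul_assoc]
  have h1 : (((U : Matrix m m ℂ) * Da * star (U : Matrix m m ℂ)) *
      ((V : Matrix m m ℂ) * Db * star (V : Matrix m m ℂ))).trace
      = ((Da * W) * (Db * star W)).trace := by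
    rw [e1, Matrix.trace_mul_comm, e2, Matrix.trace_mul_comm]
    simp only [mul_assoc]
  rw [h1, Matrix.trace]
  push_cast
  refine Finset.sum_congr rfl fun i _ => ?_
  rw [Matrix.diag, Matrix.mul_apply]
  refine Finset.sum_congr rfl fun j _ => ?_
  rw [Matrix.diagonal_mul, Matrix.diagonal_mul, Matrix.star_apply, ← Complex.mul_conj]
  simp only [Complex.star_def]
  ring

end Matrix

namespace Matrix

variable {m : Type*} [Fintype m] [DecidableEq m]

lemma normSq_row_sum_unitary {W : Matrix m m ℂ} (hWu : W * star W = 1) (i : m) :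
    ∑ j, Complex.normSq (W i j) = 1 := by
  have h2 := congrArg (fun M : Matrix m m ℂ => M i i) hWu
  simp only [Matrix.mul_apply, Matrix.one_apply_eq, Matrix.star_apply] at h2
  apply Complex.ofReal_injective
  push_cast
  rw [← h2]
  refine Finset.sum_congr rfl fun j _ => ?_
  rw [← Complex.mul_conj]
  rfl

lemma holder_of_unitary (U V : Matrix.unitaryGroup m ℂ) (a b : m → ℝ)
    (ha : ∀ i, 0 ≤ a i) (hb : ∀ i, 0 ≤ b i) {p q : ℝ} (hpq : p.HolderConjugate q) :
    ((((U : Matrix m m ℂ) * Matrix.diagonal (fun i => (a i : ℂ)) * star (U : Matrix m m ℂ)) *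
      ((V : Matrix m m ℂ) * Matrix.diagonal (fun i => (b i : ℂ)) *
        star (V : Matrix m m ℂ))).trace).re
    ≤ (∑ i, a i ^ p) ^ (1 / p) * (∑ i, b i ^ q) ^ (1 / q) := by
  rw [Matrix.trace_conj_diag_mul_conj_diag, Complex.ofReal_re]
  set W := star (U : Matrix m m ℂ) * (V : Matrix m m ℂ) with hW
  have hV := (Matrix.mem_unitaryGroup_iff).mp V.2
  have hU := (Matrix.mem_unitaryGroup_iff').mp U.2
  have hWu : W * star W = 1 := by
    rw [hW, star_mul, star_star,
      show star (U : Matrix m m ℂ) * (V : Matrix m m ℂ) *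
        (star (V : Matrix m m ℂ) * (U : Matrix m m ℂ))
        = star (U : Matrix m m ℂ) * ((V : Matrix m m ℂ) * star (V : Matrix m m ℂ)) *
          (U : Matrix m m ℂ) from by simp only [mul_assoc], hV, mul_one, hU]
  have hWu' : star W * star (star W) = 1 := by
    rw [star_star, hW, star_mul, star_star,
      show star (V : Matrix m m ℂ) * (U : Matrix m m ℂ) *
        (star (U : Matrix m m ℂ) * (V : Matrix m m ℂ))
        = star (V : Matrix m m ℂ) * ((U : Matrix m m ℂ) * star (U : Matrix m m ℂ)) *
          (V : Matrix m m ℂ) from by simp only [mul_assoc],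
      (Matrix.mem_unitaryGroup_iff).mp U.2, mul_one, (Matrix.mem_unitaryGroup_iff').mp V.2]
  set w : m → m → ℝ := fun i j => Complex.normSq (W i j) with hw
  have hwnn : ∀ i j, 0 ≤ w i j := fun i j => Complex.normSq_nonneg _
  have hrow : ∀ i, ∑ j, w i j = 1 := normSq_row_sum_unitary hWu
  have hcol : ∀ j, ∑ i, w i j = 1 := by
    intro j
    have := normSq_row_sum_unitary hWu' j
    simpa [Matrix.star_apply, Complex.normSq_conj] using this
  set f : m × m → ℝ := fun x => a x.1 * w x.1 x.2 ^ (1 / p) with hf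
  set g : m × m → ℝ := fun x => b x.2 * w x.1 x.2 ^ (1 / q) with hg
  have hfg : ∀ x : m × m, f x * g x = a x.1 * b x.2 * w x.1 x.2 := by
    intro x
    rw [hf, hg]
    have : w x.1 x.2 ^ (1 / p) * w x.1 x.2 ^ (1 / q) = w x.1 x.2 := by
      rw [← Real.rpow_add' (hwnn _ _) (by rw [one_div, one_div, hpq.inv_add_inv_eq_one]; norm_num),
        one_div, one_div, hpq.inv_add_inv_eq_one, Real.rpow_one]
    calc a x.1 * w x.1 x.2 ^ (1 / p) * (b x.2 * w x.1 x.2 ^ (1 / q))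
        = a x.1 * b x.2 * (w x.1 x.2 ^ (1 / p) * w x.1 x.2 ^ (1 / q)) := by ring
      _ = a x.1 * b x.2 * w x.1 x.2 := by rw [this]
  have hfp : ∀ x : m × m, f x ^ p = a x.1 ^ p * w x.1 x.2 := by
    intro x
    rw [hf, Real.mul_rpow (ha _) (Real.rpow_nonneg (hwnn _ _) _),
      ← Real.rpow_mul (hwnn _ _), one_div, inv_mul_cancel₀ hpq.ne_zero, Real.rpow_one]
  have hgq : ∀ x : m × m, g x ^ q = b x.2 ^ q * w x.1 x.2 := by
    intro x
    rw [hg, Real.mul_rpow (hb _) (Real.rpow_nonneg (hwnn _ _) _),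
      ← Real.rpow_mul (hwnn _ _), one_div, inv_mul_cancel₀ hpq.symm.ne_zero, Real.rpow_one]
  have key := Real.inner_le_Lp_mul_Lq_of_nonneg (Finset.univ : Finset (m × m)) hpq
    (fun x _ => mul_nonneg (ha _) (Real.rpow_nonneg (hwnn _ _) _))
    (fun x _ => mul_nonneg (hb _) (Real.rpow_nonneg (hwnn _ _) _)) (f := f) (g := g)
  have e1 : ∑ x : m × m, f x * g x = ∑ i, ∑ j, a i * b j * w i j := by
    rw [← Finset.sum_product']
    exact Finset.sum_congr rfl fun x _ => hfg x
  have e2 : ∑ x : m × m, f x ^ p = ∑ i, a i ^ p := by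
    calc ∑ x : m × m, f x ^ p = ∑ i, ∑ j, a i ^ p * w i j := by
          rw [← Finset.sum_product']
          exact Finset.sum_congr rfl fun x _ => hfp x
      _ = ∑ i, a i ^ p := by
          refine Finset.sum_congr rfl fun i _ => ?_
          rw [← Finset.mul_sum, hrow, mul_one]
  have e3 : ∑ x : m × m, g x ^ q = ∑ j, b j ^ q := by
    calc ∑ x : m × m, g x ^ q = ∑ i, ∑ j, b j ^ q * w i j := by
          rw [← Finset.sum_product']
          exact Finset.sum_congr rfl fun x _ => hgq x
      _ = ∑ j, ∑ i, b j ^ q * w i j := Finset.sum_comm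
      _ = ∑ j, b j ^ q := by
          refine Finset.sum_congr rfl fun j _ => ?_
          rw [← Finset.mul_sum, hcol, mul_one]
  rw [e1, e2, e3] at key
  exact key

end Matrix

theorem petzRenyi_le_sandwichedRenyi {n : ℕ}
    (ρ σ : Matrix (Fin n) (Fin n) ℂ) (hρ : ρ.PosSemidef) (hσ : σ.PosSemidef)
    (hρ1 : ρ.trace = 1) (hσ1 : σ.trace = 1)
    (hsupp : ∀ v : Fin n → ℂ, σ.mulVec v = 0 → ρ.mulVec v = 0)
    (α : ℝ) (hα : 1 < α) :
    petzRenyi (2 - 1 / α) ρ σ ≤ sandwichedRenyi α ρ σ := by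
  have hα0 : α ≠ 0 := by positivity
  have hα1 : (0:ℝ) < α - 1 := by linarith
  have hρH : ρ.IsHermitian := hρ.1
  have hσH : σ.IsHermitian := hσ.1
  have hrnn : ∀ i, 0 ≤ hρH.eigenvalues i := hρ.eigenvalues_nonneg
  have hsnn : ∀ i, 0 ≤ hσH.eigenvalues i := hσ.eigenvalues_nonneg
  set c : ℝ := (1 - α) / (2 * α) with hc
  set γ : ℝ := 1 - 1/α with hγ
  have hγpos : 0 < γ := by
    rw [hγ]
    have : 1/α < 1 := by rw [div_lt_one (by linarith)]; linarith
    linarith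
  set q : ℝ := α / (α - 1) with hq
  have hpq : α.HolderConjugate q := Real.HolderConjugate.conjExponent hα
  set S := Matrix.rpowH σ c with hSdef
  set R := Matrix.rpowH ρ (1/2 : ℝ) with hRdef
  have hS : S.IsHermitian := Matrix.isHermitian_rpowH σ c
  have hR : R.IsHermitian := Matrix.isHermitian_rpowH ρ _
  -- ρ = R * R
  have hρRR : R * R = ρ := by
    rw [hRdef, Matrix.rpowH_mul_rpowH hρH
      (fun i => (Real.rpow_add' (hrnn i) (by norm_num)).symm)]
    rw [show (1/2 + 1/2 : ℝ) = 1 by norm_num, Matrix.rpowH_one hρH]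
  set N := R * S with hNdef
  have hNt : Nᴴ = S * R := by
    rw [hNdef, Matrix.conjTranspose_mul, hS.eq, hR.eq]
  have hA_eq : S * ρ * S = Nᴴ * N := by
    rw [hNt, hNdef, ← hρRR]
    simp only [mul_assoc]
  have hApsd : (S * ρ * S).PosSemidef := by
    rw [hA_eq]; exact Matrix.posSemidef_conjTranspose_mul_self N
  have hA'psd : (N * Nᴴ).PosSemidef := Matrix.posSemidef_self_mul_conjTranspose N
  have hAH := hApsd.1
  have hA'H := hA'psd.1
  have hannA : ∀ i, 0 ≤ hAH.eigenvalues i := hApsd.eigenvalues_nonneg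
  have hannA' : ∀ i, 0 ≤ hA'H.eigenvalues i := hA'psd.eigenvalues_nonneg
  -- charpolys agree
  have hchar : (S * ρ * S).charpoly = (N * Nᴴ).charpoly := by
    rw [hA_eq, hNt, my_charpoly_mul_comm, ← hNt]
  -- trace of rpowH as sums of eigenvalue powers
  set QT : ℝ := ((Matrix.rpowH (S * ρ * S) α).trace).re with hQTdef
  have hQT : QT = ∑ i, hAH.eigenvalues i ^ α := by
    rw [hQTdef, Matrix.trace_rpowH hAH]
    push_cast
    simp [Complex.ofReal_re]
  have htrans : ∑ i, hAH.eigenvalues i ^ α = ∑ i, hA'H.eigenvalues i ^ α :=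
    my_sum_eig_transfer hAH hA'H hchar (fun x => x ^ α)
  have hQTnn : 0 ≤ QT := by
    rw [hQT]
    exact Finset.sum_nonneg fun i _ => Real.rpow_nonneg (hannA i) _
  -- sum of eigenvalues of ρ is 1
  have hsum1 : ∑ i, hρH.eigenvalues i = 1 := by
    have h := Matrix.trace_rpowH hρH 1
    rw [Matrix.rpowH_one hρH, hρ1] at h
    simp only [Real.rpow_one] at h
    apply Complex.ofReal_injective
    push_cast
    exact h.symm
  -- Hölder
  have hold := Matrix.holder_of_unitary hA'H.eigenvectorUnitary hρH.eigenvectorUnitary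
    (hA'H.eigenvalues) (fun i => hρH.eigenvalues i ^ γ) hannA'
    (fun i => Real.rpow_nonneg (hrnn i) _) hpq
  have hA'spec : (hA'H.eigenvectorUnitary : Matrix (Fin n) (Fin n) ℂ) *
      Matrix.diagonal (fun i => ((hA'H.eigenvalues i : ℝ) : ℂ)) *
      star (hA'H.eigenvectorUnitary : Matrix (Fin n) (Fin n) ℂ) = N * Nᴴ :=
    hA'H.spectral_theorem.symm
  have hBspec : (hρH.eigenvectorUnitary : Matrix (Fin n) (Fin n) ℂ) *
      Matrix.diagonal (fun i => ((hρH.eigenvalues i ^ γ : ℝ) : ℂ)) *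
      star (hρH.eigenvectorUnitary : Matrix (Fin n) (Fin n) ℂ) = Matrix.rpowH ρ γ :=
    (Matrix.rpowH_of_isHermitian hρH γ).symm
  rw [hA'spec, hBspec] at hold
  have hγq : ∀ i, (hρH.eigenvalues i ^ γ) ^ q = hρH.eigenvalues i := by
    intro i
    rw [← Real.rpow_mul (hrnn i), show γ * q = 1 by
      rw [hγ, hq]; field_simp, Real.rpow_one]
  have hsumq : ∑ i, (hρH.eigenvalues i ^ γ) ^ q = 1 :=
    (Finset.sum_congr rfl fun i _ => hγq i).trans hsum1
  rw [hsumq, Real.one_rpow, mul_one] at hold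
  set B := Matrix.rpowH ρ γ with hBdef
  have hRBR : R * B * R = Matrix.rpowH ρ (2 - 1/α) := by
    rw [hRdef, hBdef,
      Matrix.rpowH_mul_rpowH hρH (fun i => (Real.rpow_add' (hrnn i) (by
        rw [hγ]; positivity)).symm),
      Matrix.rpowH_mul_rpowH hρH (fun i => (Real.rpow_add' (hrnn i) (by
        rw [hγ]; positivity)).symm),
      show (1/2 + γ + 1/2 : ℝ) = 2 - 1/α by rw [hγ]; ring]
  have hγne : -γ ≠ 0 := neg_ne_zero.mpr hγpos.ne'
  have hccval : c + c = -γ := by rw [hc, hγ]; field_simp; ring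
  have hSS : S * S = Matrix.rpowH σ (-γ) := by
    rw [hSdef,
      Matrix.rpowH_mul_rpowH hσH (fun i => (Real.rpow_add' (hsnn i) (by
        rw [hccval]; exact hγne)).symm), hccval]
  have hexpσ : (1 - (2 - 1/α) : ℝ) = -γ := by rw [hγ]; ring
  have htraceQβ : ((N * Nᴴ) * B).trace
      = (Matrix.rpowH ρ (2 - 1/α) * Matrix.rpowH σ (1 - (2 - 1/α))).trace := by
    calc ((N * Nᴴ) * B).trace = (R * (S * (S * (R * B)))).trace := by
          rw [hNdef, hNt]; simp only [mul_assoc]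
      _ = ((S * (S * (R * B))) * R).trace := Matrix.trace_mul_comm _ _
      _ = ((S * S) * (R * B * R)).trace := by simp only [mul_assoc]
      _ = (Matrix.rpowH σ (-γ) * Matrix.rpowH ρ (2 - 1/α)).trace := by rw [hSS, hRBR]
      _ = (Matrix.rpowH ρ (2 - 1/α) * Matrix.rpowH σ (-γ)).trace :=
          Matrix.trace_mul_comm _ _
      _ = (Matrix.rpowH ρ (2 - 1/α) * Matrix.rpowH σ (1 - (2 - 1/α))).trace := by
          rw [hexpσ]
  rw [htraceQβ] at hold
  -- positivity of the Petz trace term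
  set W := star (hρH.eigenvectorUnitary : Matrix (Fin n) (Fin n) ℂ) *
    (hσH.eigenvectorUnitary : Matrix (Fin n) (Fin n) ℂ) with hWdef
  have hWrow : ∀ i, ∑ j, Complex.normSq (W i j) = 1 := by
    have hV := (Matrix.mem_unitaryGroup_iff).mp hσH.eigenvectorUnitary.2
    have hU := (Matrix.mem_unitaryGroup_iff').mp hρH.eigenvectorUnitary.2
    refine Matrix.normSq_row_sum_unitary ?_
    rw [hWdef, StarMul.star_mul, star_star,
      show star (hρH.eigenvectorUnitary : Matrix (Fin n) (Fin n) ℂ) *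
        (hσH.eigenvectorUnitary : Matrix (Fin n) (Fin n) ℂ) *
        (star (hσH.eigenvectorUnitary : Matrix (Fin n) (Fin n) ℂ) *
          (hρH.eigenvectorUnitary : Matrix (Fin n) (Fin n) ℂ))
        = star (hρH.eigenvectorUnitary : Matrix (Fin n) (Fin n) ℂ) *
          ((hσH.eigenvectorUnitary : Matrix (Fin n) (Fin n) ℂ) *
            star (hσH.eigenvectorUnitary : Matrix (Fin n) (Fin n) ℂ)) *
          (hρH.eigenvectorUnitary : Matrix (Fin n) (Fin n) ℂ) from by
        simp only [mul_assoc], hV, mul_one, hU]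
  have hkey : ∀ j, hσH.eigenvalues j = 0 → ∀ i, hρH.eigenvalues i ≠ 0 → W i j = 0 := by
    intro j hj i hi
    set v : Fin n → ℂ := fun k => (hσH.eigenvectorUnitary : Matrix (Fin n) (Fin n) ℂ) k j
      with hvdef
    have hUv : star (hσH.eigenvectorUnitary : Matrix (Fin n) (Fin n) ℂ) *ᵥ v
        = Pi.single j 1 := by
      ext k
      have e : (star (hσH.eigenvectorUnitary : Matrix (Fin n) (Fin n) ℂ) *ᵥ v) k
          = (star (hσH.eigenvectorUnitary : Matrix (Fin n) (Fin n) ℂ) *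
            (hσH.eigenvectorUnitary : Matrix (Fin n) (Fin n) ℂ)) k j := by
        rw [Matrix.mulVec, Matrix.mul_apply, dotProduct]
      rw [e, (Matrix.mem_unitaryGroup_iff').mp hσH.eigenvectorUnitary.2, Matrix.one_apply,
        Pi.single_apply]
    have hσv : σ *ᵥ v = 0 := by
      conv_lhs => rw [hσH.spectral_theorem, Unitary.conjStarAlgAut_apply]
      rw [← Matrix.mulVec_mulVec, ← Matrix.mulVec_mulVec, hUv]
      have : (Matrix.diagonal (RCLike.ofReal ∘ hσH.eigenvalues) : Matrix (Fin n) (Fin n) ℂ)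
          *ᵥ Pi.single j 1 = 0 := by
        rw [Matrix.diagonal_mulVec_single]
        ext k
        simp [Function.comp, hj]
      rw [this, Matrix.mulVec_zero]
    have hρv : ρ *ᵥ v = 0 := hsupp v hσv
    have hDsU : Matrix.diagonal (RCLike.ofReal ∘ hρH.eigenvalues) *
        star (hρH.eigenvectorUnitary : Matrix (Fin n) (Fin n) ℂ)
        = star (hρH.eigenvectorUnitary : Matrix (Fin n) (Fin n) ℂ) * ρ := by
      calc Matrix.diagonal (RCLike.ofReal ∘ hρH.eigenvalues) *
          star (hρH.eigenvectorUnitary : Matrix (Fin n) (Fin n) ℂ)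
          = (star (hρH.eigenvectorUnitary : Matrix (Fin n) (Fin n) ℂ) * ρ *
            (hρH.eigenvectorUnitary : Matrix (Fin n) (Fin n) ℂ)) *
            star (hρH.eigenvectorUnitary : Matrix (Fin n) (Fin n) ℂ) := by
            rw [← hρH.conjStarAlgAut_star_eigenvectorUnitary, Unitary.conjStarAlgAut_star_apply]
        _ = star (hρH.eigenvectorUnitary : Matrix (Fin n) (Fin n) ℂ) * ρ *
            ((hρH.eigenvectorUnitary : Matrix (Fin n) (Fin n) ℂ) *
              star (hρH.eigenvectorUnitary : Matrix (Fin n) (Fin n) ℂ)) := by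
            simp only [mul_assoc]
        _ = star (hρH.eigenvectorUnitary : Matrix (Fin n) (Fin n) ℂ) * ρ := by
            rw [(Matrix.mem_unitaryGroup_iff).mp hρH.eigenvectorUnitary.2, mul_one]
    have h2 : Matrix.diagonal (RCLike.ofReal ∘ hρH.eigenvalues) *ᵥ
        (star (hρH.eigenvectorUnitary : Matrix (Fin n) (Fin n) ℂ) *ᵥ v) = 0 := by
      rw [Matrix.mulVec_mulVec, hDsU, ← Matrix.mulVec_mulVec, hρv, Matrix.mulVec_zero]
    have h3 := congrFun h2 i
    rw [Matrix.mulVec_diagonal] at h3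
    have h4 : (star (hρH.eigenvectorUnitary : Matrix (Fin n) (Fin n) ℂ) *ᵥ v) i = 0 := by
      rcases mul_eq_zero.mp h3 with h | h
      · exact absurd (Complex.ofReal_injective (h.trans (Complex.ofReal_zero).symm)) hi
      · exact h
    have e2 : W i j = (star (hρH.eigenvectorUnitary : Matrix (Fin n) (Fin n) ℂ) *ᵥ v) i := by
      rw [hWdef, Matrix.mul_apply, Matrix.mulVec, dotProduct]
    rw [e2, h4]
  have hi0 : ∃ i, hρH.eigenvalues i ≠ 0 := by
    by_contra h
    push_neg at h
    rw [Finset.sum_eq_zero (fun i _ => h i)] at hsum1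
    norm_num at hsum1
  obtain ⟨i0, hi0⟩ := hi0
  have hri0 : 0 < hρH.eigenvalues i0 := lt_of_le_of_ne (hrnn i0) (Ne.symm hi0)
  have hj0 : ∃ j, hσH.eigenvalues j ≠ 0 ∧ W i0 j ≠ 0 := by
    by_contra h
    push_neg at h
    have hz : ∀ j, Complex.normSq (W i0 j) = 0 := by
      intro j
      by_cases hs : hσH.eigenvalues j = 0
      · rw [hkey j hs i0 hi0]; simp
      · rw [h j hs]; simp
    have h1 := hWrow i0
    rw [Finset.sum_eq_zero (fun j _ => hz j)] at h1
    norm_num at h1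
  obtain ⟨j0, hsj0, hWj0⟩ := hj0
  have hsj0' : 0 < hσH.eigenvalues j0 := lt_of_le_of_ne (hsnn j0) (Ne.symm hsj0)
  set Qβ : ℝ := ((Matrix.rpowH ρ (2 - 1/α) * Matrix.rpowH σ (1 - (2 - 1/α))).trace).re
    with hQβdef
  have hQβformula : Qβ = ∑ i, ∑ j, hρH.eigenvalues i ^ (2 - 1/α) *
      hσH.eigenvalues j ^ (1 - (2 - 1/α)) * Complex.normSq (W i j) := by
    rw [hQβdef, Matrix.rpowH_of_isHermitian hρH, Matrix.rpowH_of_isHermitian hσH,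
      Matrix.trace_conj_diag_mul_conj_diag, Complex.ofReal_re]
  have hQβpos : 0 < Qβ := by
    rw [hQβformula]
    refine Finset.sum_pos' (fun i _ => Finset.sum_nonneg fun j _ =>
      mul_nonneg (mul_nonneg (Real.rpow_nonneg (hrnn i) _)
        (Real.rpow_nonneg (hsnn j) _)) (Complex.normSq_nonneg _)) ⟨i0, Finset.mem_univ _, ?_⟩
    refine Finset.sum_pos' (fun j _ =>
      mul_nonneg (mul_nonneg (Real.rpow_nonneg (hrnn i0) _)
        (Real.rpow_nonneg (hsnn j) _)) (Complex.normSq_nonneg _)) ⟨j0, Finset.mem_univ _, ?_⟩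
    exact mul_pos (mul_pos (Real.rpow_pos_of_pos hri0 _) (Real.rpow_pos_of_pos hsj0' _))
      (Complex.normSq_pos.mpr hWj0)
  -- conclude
  have hQT' : (∑ i, hA'H.eigenvalues i ^ α) = QT := by rw [hQT, htrans]
  rw [hQT'] at hold
  have h5 : Qβ ^ α ≤ QT := by
    have h := Real.rpow_le_rpow hQβpos.le hold (by positivity)
    rwa [← Real.rpow_mul hQTnn, one_div, inv_mul_cancel₀ hα0, Real.rpow_one] at h
  have h6 : α * Real.log Qβ ≤ Real.log QT := by
    rw [← Real.log_rpow hQβpos]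
    exact Real.log_le_log (Real.rpow_pos_of_pos hQβpos α) h5
  rw [petzRenyi, sandwichedRenyi]
  show (2 - 1/α - 1 : ℝ)⁻¹ * Real.log Qβ ≤ (α - 1)⁻¹ * Real.log QT
  have hβinv : (2 - 1/α - 1 : ℝ)⁻¹ = (α - 1)⁻¹ * α := by
    rw [show (2 - 1/α - 1 : ℝ) = (α - 1)/α by field_simp; ring, inv_div, div_eq_mul_inv,
      mul_comm]
  calc (2 - 1/α - 1 : ℝ)⁻¹ * Real.log Qβ = (α - 1)⁻¹ * (α * Real.log Qβ) := by
        rw [hβinv]; ring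
    _ ≤ (α - 1)⁻¹ * Real.log QT :=
        mul_le_mul_of_nonneg_left h6 (inv_nonneg.mpr hα1.le)
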